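/- Let G be a (P_6, bull)-free graph that is quasi-prime, contains no K_5, no double wheel, and no induced copies of F_0 through F_6, and contains an induced gem {v_1,...,v_5} (edges v_1v_2, v_2v_3, v_3v_4, v_5v_i for i=1,...,4). Define X = {x : x adjacent to v_1 and v_4, nonadjacent to v_2 and v_3}, and V_5 = {x : N(x) ∩ {v_1,...,v_5} \ {v_5} = {v_1,v_2,v_3,v_4}}. Then X is anticomplete to V_5 and X is nonempty implies every vertex of X is adjacent to every vertex of V_1 ∪ V_4 and nonadjacent to every vertex of V_2 ∪ V_3 ∪ V_5 (where V_i = {x : N(x) ∩ S \ {v_i} = N_S(v_i)} for S = {v_1,...,v_5}). -/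

import Mathlib

/-- The bull: vertices `a,b,c,d,e = 0,1,2,3,4` with edges `ab, bc, cd, be, ce`. -/
def bull : SimpleGraph (Fin 5) :=
  SimpleGraph.fromRel (fun a b => (a, b) ∈
    ([(0,1),(1,2),(2,3),(1,4),(2,4)] : List (Fin 5 × Fin 5)))

/-- The gem: a path `v₁v₂v₃v₄ = 0,1,2,3` plus a dominating vertex `v₅ = 4`. -/
def gem : SimpleGraph (Fin 5) :=
  SimpleGraph.fromRel (fun a b => (a, b) ∈
    ([(0,1),(1,2),(2,3),(4,0),(4,1),(4,2),(4,3)] : List (Fin 5 × Fin 5)))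

/-- The double wheel: a `C₅` plus two adjacent vertices each complete to the cycle. -/
def doubleWheel : SimpleGraph (Fin 7) :=
  SimpleGraph.fromRel (fun a b => (a, b) ∈
    ([(0,1),(1,2),(2,3),(3,4),(4,0),(5,6),
      (5,0),(5,1),(5,2),(5,3),(5,4),
      (6,0),(6,1),(6,2),(6,3),(6,4)] : List (Fin 7 × Fin 7)))

/-- `F₀`: a 5-cycle, a vertex complete to it, and a vertex adjacent to `v₁,…,v₄`. -/
def F0 : SimpleGraph (Fin 7) :=
  SimpleGraph.fromRel (fun a b => (a, b) ∈
    ([(0,1),(1,2),(2,3),(3,4),(4,0),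
      (5,0),(5,1),(5,2),(5,3),(5,4),
      (6,0),(6,1),(6,2),(6,3)] : List (Fin 7 × Fin 7)))

/-- `F₁`: a `P₅` plus a dominating vertex. -/
def F1 : SimpleGraph (Fin 6) :=
  SimpleGraph.fromRel (fun a b => (a, b) ∈
    ([(0,1),(1,2),(2,3),(3,4),(5,0),(5,1),(5,2),(5,3),(5,4)] : List (Fin 6 × Fin 6)))

/-- `F₂`: `F₁` plus the edge `v₁v₅`. -/
def F2 : SimpleGraph (Fin 6) :=
  SimpleGraph.fromRel (fun a b => (a, b) ∈
    ([(0,1),(1,2),(2,3),(3,4),(0,4),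
      (5,0),(5,1),(5,2),(5,3),(5,4)] : List (Fin 6 × Fin 6)))

/-- `F₃`. -/
def F3 : SimpleGraph (Fin 6) :=
  SimpleGraph.fromRel (fun a b => (a, b) ∈
    ([(0,1),(0,2),(1,2),(1,3),(2,3),(2,4),(3,4),(3,5),(4,5)] : List (Fin 6 × Fin 6)))

/-- `F₄`: `F₃` plus the edge `v₁v₆`. -/
def F4 : SimpleGraph (Fin 6) :=
  SimpleGraph.fromRel (fun a b => (a, b) ∈
    ([(0,1),(0,2),(1,2),(1,3),(2,3),(2,4),(3,4),(3,5),(4,5),(0,5)] :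
      List (Fin 6 × Fin 6)))

/-- The cycle on 6 vertices. -/
def cycle6 : SimpleGraph (Fin 6) :=
  SimpleGraph.fromRel (fun a b => (a, b) ∈
    ([(0,1),(1,2),(2,3),(3,4),(4,5),(5,0)] : List (Fin 6 × Fin 6)))

/-- `F₅`: the complement of `C₆`. -/
def F5 : SimpleGraph (Fin 6) := cycle6ᶜ

/-- `F₆`. -/
def F6 : SimpleGraph (Fin 7) :=
  SimpleGraph.fromRel (fun a b => (a, b) ∈
    ([(0,1),(1,2),(2,3),(3,4),(4,0),
      (5,0),(5,1),(5,2),(5,4),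
      (6,1),(6,2),(6,3),(6,4),(6,5)] : List (Fin 7 × Fin 7)))

/-- `G` contains no induced subgraph isomorphic to `F`. -/
def InducedFree {α β : Type*} (F : SimpleGraph α) (G : SimpleGraph β) : Prop :=
  ¬ ∃ f : α ↪ β, ∀ a b : α, G.Adj (f a) (f b) ↔ F.Adj a b

/-- A homogeneous set: every vertex outside `S` is complete or anticomplete to `S`. -/
def IsHomog {V : Type*} (G : SimpleGraph V) (S : Set V) : Prop :=
  ∀ v ∉ S, (∀ s ∈ S, G.Adj v s) ∨ (∀ s ∈ S, ¬ G.Adj v s)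

/-- A graph is quasi-prime if every proper homogeneous set is a clique. -/
def QuasiPrime {V : Type*} (G : SimpleGraph V) : Prop :=
  ∀ S : Set V, IsHomog G S → 2 ≤ S.ncard → S ≠ Set.univ → G.IsClique S

/-- Given an induced gem `f 0, …, f 4` in `G` (with dominating vertex `f 4`), the set
`Vᵢ` of vertices whose neighborhood on `S \ {vᵢ}` equals `N_S(vᵢ)`, where
`S = {v₁,…,v₅}`. -/
def Vset {V : Type*} (G : SimpleGraph V) (f : Fin 5 ↪ V) (i : Fin 5) : Set V :=
  { x | ∀ j : Fin 5, j ≠ i → (G.Adj x (f j) ↔ gem.Adj i j) }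

/-- The set `X` of vertices complete to `{v₁, v₄}` and anticomplete to `{v₂, v₃}`. -/
def Xset {V : Type*} (G : SimpleGraph V) (f : Fin 5 ↪ V) : Set V :=
  { x | G.Adj x (f 0) ∧ G.Adj x (f 3) ∧ ¬ G.Adj x (f 1) ∧ ¬ G.Adj x (f 2) }

instance : DecidableRel gem.Adj := fun a b => by
  unfold gem; rw [SimpleGraph.fromRel_adj]; infer_instance

instance : DecidableRel bull.Adj := fun a b => by
  unfold bull; rw [SimpleGraph.fromRel_adj]; infer_instance

instance : DecidableRel F2.Adj := fun a b => by
  unfold F2; rw [SimpleGraph.fromRel_adj]; infer_instance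

instance : DecidableRel F4.Adj := fun a b => by
  unfold F4; rw [SimpleGraph.fromRel_adj]; infer_instance

lemma induced_of_adj_iff {n : ℕ} {V : Type*} (F : SimpleGraph (Fin n)) (G : SimpleGraph V)
    (g : Fin n → V) (h : ∀ a b, G.Adj (g a) (g b) ↔ F.Adj a b)
    (htwin : ∀ a b : Fin n, a ≠ b → ¬ F.Adj a b → ∃ c, ¬ (F.Adj a c ↔ F.Adj b c)) :
    ∃ f : Fin n ↪ V, ∀ a b, G.Adj (f a) (f b) ↔ F.Adj a b := by
  have hinj : Function.Injective g := by
    intro a b hab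
    by_contra hne
    have hF : ¬ F.Adj a b := by
      intro hF
      have := (h a b).mpr hF
      rw [hab] at this
      exact G.irrefl this
    obtain ⟨c, hc⟩ := htwin a b hne hF
    apply hc
    rw [← h a c, ← h b c, hab]
  exact ⟨⟨g, hinj⟩, h⟩

set_option maxHeartbeats 4000000 in
/-- Items (a)–(b) of Theorem 4.1: for a quasi-prime `(P₆, bull)`-free graph with no
`K₅`, no double wheel and no `F₀,…,F₆`, containing an induced gem `v₁,…,v₅`, the set
`X` is anticomplete to `V₅`, and (`X` being nonempty) every vertex of `X` is complete
to `V₁ ∪ V₄` and anticomplete to `V₂ ∪ V₃ ∪ V₅`. -/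
theorem gem_X_structure {V : Type*} [Fintype V] (G : SimpleGraph V)
    (hP6 : InducedFree (SimpleGraph.pathGraph 6) G) (hbull : InducedFree bull G)
    (hqp : QuasiPrime G) (hK5 : G.CliqueFree 5) (hdw : InducedFree doubleWheel G)
    (h0 : InducedFree F0 G) (h1 : InducedFree F1 G) (h2 : InducedFree F2 G)
    (h3 : InducedFree F3 G) (h4 : InducedFree F4 G) (h5 : InducedFree F5 G)
    (h6 : InducedFree F6 G)
    (f : Fin 5 ↪ V) (hgem : ∀ a b : Fin 5, G.Adj (f a) (f b) ↔ gem.Adj a b) :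
    (∀ x ∈ Xset G f, ∀ y ∈ Vset G f 4, ¬ G.Adj x y) ∧
    ((Xset G f).Nonempty →
      ∀ x ∈ Xset G f,
        (∀ y, y ∈ Vset G f 0 ∪ Vset G f 3 → G.Adj x y) ∧
        (∀ y, y ∈ Vset G f 1 ∪ Vset G f 2 ∪ Vset G f 4 → ¬ G.Adj x y)) := by
  have hX4 : ∀ x ∈ Xset G f, ¬ G.Adj x (f 4) := by
    intro x hx hx4
    simp only [Xset, Set.mem_setOf_eq] at hx
    obtain ⟨hx0, hx3, hx1, hx2⟩ := hx
    have hx0' : G.Adj (f 0) x := hx0.symm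
    have hx3' : G.Adj (f 3) x := hx3.symm
    have hx4' : G.Adj (f 4) x := hx4.symm
    have hx1' : ¬ G.Adj (f 1) x := fun h => hx1 h.symm
    have hx2' : ¬ G.Adj (f 2) x := fun h => hx2 h.symm
    apply h2
    apply induced_of_adj_iff F2 G ![f 0, f 1, f 2, f 3, x, f 4] ?_ (by decide)
    intro a b
    fin_cases a <;> fin_cases b <;>
      first
        | exact iff_of_false G.irrefl (by decide)
        | exact (hgem _ _).trans (by decide)
        | exact iff_of_true (by assumption) (by decide)
        | exact iff_of_false (by assumption) (by decide)
  have key5 : ∀ x ∈ Xset G f, ∀ y ∈ Vset G f 4, ¬ G.Adj x y := by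
    intro x hx y hy hxy
    have hx4 : ¬ G.Adj x (f 4) := hX4 x hx
    simp only [Xset, Set.mem_setOf_eq] at hx
    obtain ⟨hx0, hx3, hx1, hx2⟩ := hx
    have hx0' : G.Adj (f 0) x := hx0.symm
    have hx3' : G.Adj (f 3) x := hx3.symm
    have hx1' : ¬ G.Adj (f 1) x := fun h => hx1 h.symm
    have hx2' : ¬ G.Adj (f 2) x := fun h => hx2 h.symm
    have hx4' : ¬ G.Adj (f 4) x := fun h => hx4 h.symm
    simp only [Vset, Set.mem_setOf_eq] at hy
    have hy0 : G.Adj y (f 0) := (hy 0 (by decide)).mpr (by decide)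
    have hy0' : G.Adj (f 0) y := hy0.symm
    have hy1 : G.Adj y (f 1) := (hy 1 (by decide)).mpr (by decide)
    have hy1' : G.Adj (f 1) y := hy1.symm
    have hy2 : G.Adj y (f 2) := (hy 2 (by decide)).mpr (by decide)
    have hy2' : G.Adj (f 2) y := hy2.symm
    have hy3 : G.Adj y (f 3) := (hy 3 (by decide)).mpr (by decide)
    have hy3' : G.Adj (f 3) y := hy3.symm
    have hxy' : G.Adj y x := hxy.symm
    apply h2
    apply induced_of_adj_iff F2 G ![f 0, f 1, f 2, f 3, x, y] ?_ (by decide)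
    intro a b
    fin_cases a <;> fin_cases b <;>
      first
        | exact iff_of_false G.irrefl (by decide)
        | exact (hgem _ _).trans (by decide)
        | exact iff_of_true (by assumption) (by decide)
        | exact iff_of_false (by assumption) (by decide)
  refine ⟨key5, fun _hne x hxX => ⟨?_, ?_⟩⟩
  · intro y hy
    rcases hy with hy | hy
    · -- y ∈ Vset G f 0
      by_contra hxy
      have hx := hxX
      have hx4 : ¬ G.Adj x (f 4) := hX4 x hxX
      simp only [Xset, Set.mem_setOf_eq] at hx
      obtain ⟨hx0, hx3, hx1, hx2⟩ := hx
      have hx0' : G.Adj (f 0) x := hx0.symm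
      have hx3' : G.Adj (f 3) x := hx3.symm
      have hx1' : ¬ G.Adj (f 1) x := fun h => hx1 h.symm
      have hx2' : ¬ G.Adj (f 2) x := fun h => hx2 h.symm
      have hx4' : ¬ G.Adj (f 4) x := fun h => hx4 h.symm
      simp only [Vset, Set.mem_setOf_eq] at hy
      have hy1 : G.Adj y (f 1) := (hy 1 (by decide)).mpr (by decide)
      have hy1' : G.Adj (f 1) y := hy1.symm
      have hy2 : ¬ G.Adj y (f 2) := fun h => absurd ((hy 2 (by decide)).mp h) (by decide)
      have hy2' : ¬ G.Adj (f 2) y := fun h => hy2 h.symm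
      have hy3 : ¬ G.Adj y (f 3) := fun h => absurd ((hy 3 (by decide)).mp h) (by decide)
      have hy3' : ¬ G.Adj (f 3) y := fun h => hy3 h.symm
      have hy4 : G.Adj y (f 4) := (hy 4 (by decide)).mpr (by decide)
      have hy4' : G.Adj (f 4) y := hy4.symm
      have hxy' : ¬ G.Adj y x := fun h => hxy h.symm
      by_cases hy0 : G.Adj y (f 0)
      · have hy0' : G.Adj (f 0) y := hy0.symm
        apply hbull
        apply induced_of_adj_iff bull G ![f 2, f 1, f 0, x, y] ?_ (by decide)
        intro a b
        fin_cases a <;> fin_cases b <;>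
          first
            | exact iff_of_false G.irrefl (by decide)
            | exact (hgem _ _).trans (by decide)
            | exact iff_of_true (by assumption) (by decide)
            | exact iff_of_false (by assumption) (by decide)
      · have hy0' : ¬ G.Adj (f 0) y := fun h => hy0 h.symm
        apply hbull
        apply induced_of_adj_iff bull G ![x, f 3, f 4, y, f 2] ?_ (by decide)
        intro a b
        fin_cases a <;> fin_cases b <;>
          first
            | exact iff_of_false G.irrefl (by decide)
            | exact (hgem _ _).trans (by decide)
            | exact iff_of_true (by assumption) (by decide)
            | exact iff_of_false (by assumption) (by decide)
    · -- y ∈ Vset G f 3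
      by_contra hxy
      have hx := hxX
      have hx4 : ¬ G.Adj x (f 4) := hX4 x hxX
      simp only [Xset, Set.mem_setOf_eq] at hx
      obtain ⟨hx0, hx3, hx1, hx2⟩ := hx
      have hx0' : G.Adj (f 0) x := hx0.symm
      have hx3' : G.Adj (f 3) x := hx3.symm
      have hx1' : ¬ G.Adj (f 1) x := fun h => hx1 h.symm
      have hx2' : ¬ G.Adj (f 2) x := fun h => hx2 h.symm
      have hx4' : ¬ G.Adj (f 4) x := fun h => hx4 h.symm
      simp only [Vset, Set.mem_setOf_eq] at hy
      have hy0 : ¬ G.Adj y (f 0) := fun h => absurd ((hy 0 (by decide)).mp h) (by decide)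
      have hy0' : ¬ G.Adj (f 0) y := fun h => hy0 h.symm
      have hy1 : ¬ G.Adj y (f 1) := fun h => absurd ((hy 1 (by decide)).mp h) (by decide)
      have hy1' : ¬ G.Adj (f 1) y := fun h => hy1 h.symm
      have hy2 : G.Adj y (f 2) := (hy 2 (by decide)).mpr (by decide)
      have hy2' : G.Adj (f 2) y := hy2.symm
      have hy4 : G.Adj y (f 4) := (hy 4 (by decide)).mpr (by decide)
      have hy4' : G.Adj (f 4) y := hy4.symm
      have hxy' : ¬ G.Adj y x := fun h => hxy h.symm
      by_cases hy3 : G.Adj y (f 3)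
      · have hy3' : G.Adj (f 3) y := hy3.symm
        apply hbull
        apply induced_of_adj_iff bull G ![f 1, f 2, f 3, x, y] ?_ (by decide)
        intro a b
        fin_cases a <;> fin_cases b <;>
          first
            | exact iff_of_false G.irrefl (by decide)
            | exact (hgem _ _).trans (by decide)
            | exact iff_of_true (by assumption) (by decide)
            | exact iff_of_false (by assumption) (by decide)
      · have hy3' : ¬ G.Adj (f 3) y := fun h => hy3 h.symm
        apply hbull
        apply induced_of_adj_iff bull G ![x, f 0, f 4, y, f 1] ?_ (by decide)
        intro a b
        fin_cases a <;> fin_cases b <;>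
          first
            | exact iff_of_false G.irrefl (by decide)
            | exact (hgem _ _).trans (by decide)
            | exact iff_of_true (by assumption) (by decide)
            | exact iff_of_false (by assumption) (by decide)
  · intro y hy
    rcases hy with hy | hy
    rcases hy with hy | hy
    · -- y ∈ Vset G f 1
      intro hxy
      have hx := hxX
      have hx4 : ¬ G.Adj x (f 4) := hX4 x hxX
      simp only [Xset, Set.mem_setOf_eq] at hx
      obtain ⟨hx0, hx3, hx1, hx2⟩ := hx
      have hx0' : G.Adj (f 0) x := hx0.symm
      have hx3' : G.Adj (f 3) x := hx3.symm
      have hx1' : ¬ G.Adj (f 1) x := fun h => hx1 h.symm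
      have hx2' : ¬ G.Adj (f 2) x := fun h => hx2 h.symm
      have hx4' : ¬ G.Adj (f 4) x := fun h => hx4 h.symm
      simp only [Vset, Set.mem_setOf_eq] at hy
      have hy0 : G.Adj y (f 0) := (hy 0 (by decide)).mpr (by decide)
      have hy0' : G.Adj (f 0) y := hy0.symm
      have hy2 : G.Adj y (f 2) := (hy 2 (by decide)).mpr (by decide)
      have hy2' : G.Adj (f 2) y := hy2.symm
      have hy3 : ¬ G.Adj y (f 3) := fun h => absurd ((hy 3 (by decide)).mp h) (by decide)
      have hy3' : ¬ G.Adj (f 3) y := fun h => hy3 h.symm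
      have hy4 : G.Adj y (f 4) := (hy 4 (by decide)).mpr (by decide)
      have hy4' : G.Adj (f 4) y := hy4.symm
      have hxy' : G.Adj y x := hxy.symm
      by_cases hy1 : G.Adj y (f 1)
      · have hy1' : G.Adj (f 1) y := hy1.symm
        apply h4
        apply induced_of_adj_iff F4 G ![f 3, f 2, f 4, y, f 0, x] ?_ (by decide)
        intro a b
        fin_cases a <;> fin_cases b <;>
          first
            | exact iff_of_false G.irrefl (by decide)
            | exact (hgem _ _).trans (by decide)
            | exact iff_of_true (by assumption) (by decide)
            | exact iff_of_false (by assumption) (by decide)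
      · have hy1' : ¬ G.Adj (f 1) y := fun h => hy1 h.symm
        apply hbull
        apply induced_of_adj_iff bull G ![f 1, f 0, x, f 3, y] ?_ (by decide)
        intro a b
        fin_cases a <;> fin_cases b <;>
          first
            | exact iff_of_false G.irrefl (by decide)
            | exact (hgem _ _).trans (by decide)
            | exact iff_of_true (by assumption) (by decide)
            | exact iff_of_false (by assumption) (by decide)
    · -- y ∈ Vset G f 2
      intro hxy
      have hx := hxX
      have hx4 : ¬ G.Adj x (f 4) := hX4 x hxX
      simp only [Xset, Set.mem_setOf_eq] at hx
      obtain ⟨hx0, hx3, hx1, hx2⟩ := hx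
      have hx0' : G.Adj (f 0) x := hx0.symm
      have hx3' : G.Adj (f 3) x := hx3.symm
      have hx1' : ¬ G.Adj (f 1) x := fun h => hx1 h.symm
      have hx2' : ¬ G.Adj (f 2) x := fun h => hx2 h.symm
      have hx4' : ¬ G.Adj (f 4) x := fun h => hx4 h.symm
      simp only [Vset, Set.mem_setOf_eq] at hy
      have hy0 : ¬ G.Adj y (f 0) := fun h => absurd ((hy 0 (by decide)).mp h) (by decide)
      have hy0' : ¬ G.Adj (f 0) y := fun h => hy0 h.symm
      have hy1 : G.Adj y (f 1) := (hy 1 (by decide)).mpr (by decide)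
      have hy1' : G.Adj (f 1) y := hy1.symm
      have hy3 : G.Adj y (f 3) := (hy 3 (by decide)).mpr (by decide)
      have hy3' : G.Adj (f 3) y := hy3.symm
      have hy4 : G.Adj y (f 4) := (hy 4 (by decide)).mpr (by decide)
      have hy4' : G.Adj (f 4) y := hy4.symm
      have hxy' : G.Adj y x := hxy.symm
      by_cases hy2 : G.Adj y (f 2)
      · have hy2' : G.Adj (f 2) y := hy2.symm
        apply h4
        apply induced_of_adj_iff F4 G ![f 0, f 1, f 4, y, f 3, x] ?_ (by decide)
        intro a b
        fin_cases a <;> fin_cases b <;>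
          first
            | exact iff_of_false G.irrefl (by decide)
            | exact (hgem _ _).trans (by decide)
            | exact iff_of_true (by assumption) (by decide)
            | exact iff_of_false (by assumption) (by decide)
      · have hy2' : ¬ G.Adj (f 2) y := fun h => hy2 h.symm
        apply hbull
        apply induced_of_adj_iff bull G ![f 0, x, f 3, f 2, y] ?_ (by decide)
        intro a b
        fin_cases a <;> fin_cases b <;>
          first
            | exact iff_of_false G.irrefl (by decide)
            | exact (hgem _ _).trans (by decide)
            | exact iff_of_true (by assumption) (by decide)
            | exact iff_of_false (by assumption) (by decide)
    · -- y ∈ Vset G f 4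
      exact key5 x hxX y hy
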